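/- Let ℓ² denote the real Hilbert space of square-summable sequences of real numbers, and let Q = {x ∈ ℓ² : |x(n)| ≤ 2^{-n} for all n ∈ ℕ} be the Hilbert cube. Consider the metric space X = ℝ × Q with the product distance. Then: (i) X is a proper metric space, i.e. all closed balls in X are compact; and (ii) X is cocompact, i.e. there is a compact set C ⊆ X such that for every point p ∈ X there is a bijective isometry h : X → X with h(p) ∈ C. Indeed, for each a ∈ ℝ the translation (t,q) ↦ (t+a, q) is a bijective isometry of X, and C = [0,1] × Q is a compact generating domain. -/

import Mathlib

/-- The Hilbert cube: the set of square-summable real sequences `x` with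
`|x n| ≤ 2⁻ⁿ` for all `n`. -/
def hilbertCube : Set (lp (fun _ : ℕ => ℝ) 2) :=
  {x | ∀ n : ℕ, |x n| ≤ (2 : ℝ) ^ (-(n : ℤ))}

noncomputable section HilbertCubeAux

open scoped ENNReal

local notation "ℓ²" => lp (fun _ : ℕ => ℝ) 2

private lemma hc_two_toReal_pos : 0 < ((2 : ℝ≥0∞)).toReal := by norm_num

/-- truncation/approximation map -/
private def hcTruncMap (N : ℕ) (y : ℕ → ℝ) : ℓ² :=
  ∑ n ∈ Finset.range N, lp.single 2 n (y n)

private lemma hcTruncMap_apply (N : ℕ) (y : ℕ → ℝ) (i : ℕ) :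
    hcTruncMap N y i = if i ∈ Finset.range N then y i else 0 := by
  rw [hcTruncMap, lp.coeFn_sum, Finset.sum_apply]
  simp [lp.single_apply, Finset.sum_dite_eq]

private lemma hc_continuous_truncMap (N : ℕ) : Continuous (hcTruncMap N) := by
  have h : ∀ n : ℕ, (fun y : ℕ → ℝ => lp.single (E := fun _ : ℕ => ℝ) 2 n (y n))
      = fun y : ℕ → ℝ => y n • lp.single 2 n (1 : ℝ) := by
    intro n; funext y
    rw [← lp.single_smul]; simp
  refine continuous_finset_sum _ fun n _ => ?_
  rw [h n]
  exact (continuous_apply n).smul continuous_const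

private lemma hc_tail_est {x : ℓ²} (hx : x ∈ hilbertCube) (N : ℕ) :
    ‖x - hcTruncMap N (⇑x)‖ ≤ Real.sqrt (2 * (2 : ℝ) ^ (-(N : ℤ))) := by
  have hC : (0:ℝ) ≤ Real.sqrt (2 * (2 : ℝ) ^ (-(N : ℤ))) := Real.sqrt_nonneg _
  refine lp.norm_le_of_forall_sum_le hc_two_toReal_pos hC fun s => ?_
  rw [show ((2 : ℝ≥0∞)).toReal = (2:ℝ) by norm_num]
  have hb : ∀ i ∈ s, ‖(x - hcTruncMap N (⇑x)) i‖ ^ (2:ℝ)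
      ≤ (2 : ℝ) ^ (-(N : ℤ)) * (1/2 : ℝ) ^ i := by
    intro i _
    have hcoe : (x - hcTruncMap N (⇑x)) i = if i ∈ Finset.range N then 0 else x i := by
      rw [lp.coeFn_sub, Pi.sub_apply, hcTruncMap_apply]
      split <;> simp
    rw [hcoe]
    split
    · simp [Real.zero_rpow]
    · rename_i hi
      rw [Finset.mem_range, not_lt] at hi
      have h1 : ‖x i‖ ≤ (2:ℝ) ^ (-(i:ℤ)) := hx i
      have h2 : (0:ℝ) ≤ ‖x i‖ := norm_nonneg _
      have := Real.rpow_le_rpow h2 h1 (by norm_num : (0:ℝ) ≤ 2)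
      refine this.trans ?_
      have hsq : ∀ x : ℝ, x ^ (2:ℝ) = x * x := fun x => by
        rw [show (2:ℝ) = ((2:ℕ):ℝ) by norm_num, Real.rpow_natCast, sq]
      rw [hsq]
      have e1 : (2:ℝ) ^ (-(i:ℤ)) = (1/2:ℝ) ^ i := by
        rw [zpow_neg, zpow_natCast, one_div, inv_pow]
      have e2 : (2:ℝ) ^ (-(i:ℤ)) ≤ (2:ℝ) ^ (-(N:ℤ)) := by
        apply zpow_le_zpow_right₀ (by norm_num : (1:ℝ) ≤ 2)
        exact neg_le_neg (Int.ofNat_le.mpr hi)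
      exact mul_le_mul e2 (le_of_eq e1) (by positivity) (by positivity)
  calc ∑ i ∈ s, ‖(x - hcTruncMap N (⇑x)) i‖ ^ (2:ℝ)
      ≤ ∑ i ∈ s, (2 : ℝ) ^ (-(N : ℤ)) * (1/2 : ℝ) ^ i := Finset.sum_le_sum hb
    _ ≤ ∑' i : ℕ, (2 : ℝ) ^ (-(N : ℤ)) * (1/2 : ℝ) ^ i := by
        refine Summable.sum_le_tsum s (fun i _ => by positivity) ?_
        exact (summable_geometric_two).mul_left _
    _ = (2 : ℝ) ^ (-(N : ℤ)) * 2 := by rw [tsum_mul_left, tsum_geometric_two]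
    _ = Real.sqrt (2 * (2 : ℝ) ^ (-(N : ℤ))) ^ (2:ℝ) := by
        have hsq : ∀ x : ℝ, x ^ (2:ℝ) = x * x := fun x => by
          rw [show (2:ℝ) = ((2:ℕ):ℝ) by norm_num, Real.rpow_natCast, sq]
        rw [hsq, Real.mul_self_sqrt (by positivity)]
        ring

private lemma hc_isClosed : IsClosed hilbertCube := by
  haveI : Fact ((1:ℝ≥0∞) ≤ 2) := ⟨by norm_num⟩
  have hc : Continuous fun x : ℓ² => (⇑x : ℕ → ℝ) :=
    (lp.uniformContinuous_coe (p := 2)).continuous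
  have he : hilbertCube = ⋂ n : ℕ, {x : ℓ² | |x n| ≤ (2:ℝ)^(-(n:ℤ))} := by
    ext x; simp [hilbertCube, Set.mem_iInter]
  rw [he]
  refine isClosed_iInter fun n => isClosed_le ?_ continuous_const
  exact continuous_abs.comp ((continuous_apply n).comp hc)

lemma hc_isCompact : IsCompact hilbertCube := by
  haveI : Fact ((1:ℝ≥0∞) ≤ 2) := ⟨by norm_num⟩
  refine TotallyBounded.isCompact_of_isClosed ?_ hc_isClosed
  rw [Metric.totallyBounded_iff]
  intro ε hε
  obtain ⟨N, hN⟩ := exists_pow_lt_of_lt_one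
    (show 0 < (ε/2)^2/2 by positivity) (by norm_num : (1/2:ℝ) < 1)
  have hN' : Real.sqrt (2 * (2:ℝ)^(-(N:ℤ))) < ε/2 := by
    rw [Real.sqrt_lt' (by positivity)]
    have hz : (2:ℝ)^(-(N:ℤ)) = (1/2:ℝ)^N := by
      rw [zpow_neg, zpow_natCast, one_div, inv_pow]
    rw [hz]; nlinarith [hN]
  have hB : IsCompact (Set.pi Set.univ fun _ : ℕ => Set.Icc (-1:ℝ) 1) :=
    isCompact_univ_pi fun _ => isCompact_Icc
  have hK : IsCompact (hcTruncMap N '' (Set.pi Set.univ fun _ : ℕ => Set.Icc (-1:ℝ) 1)) :=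
    hB.image (hc_continuous_truncMap N)
  obtain ⟨t, htf, ht⟩ := Metric.totallyBounded_iff.mp hK.totallyBounded (ε/2) (by positivity)
  refine ⟨t, htf, fun x hx => ?_⟩
  have hxB : ⇑x ∈ Set.pi Set.univ fun _ : ℕ => Set.Icc (-1:ℝ) 1 := by
    intro n _
    have h1 := hx n
    have h2 : (2:ℝ)^(-(n:ℤ)) ≤ 1 := zpow_le_one_of_nonpos₀ (by norm_num) (by simp)
    have := abs_le.mp (h1.trans h2)
    exact ⟨this.1, this.2⟩
  have hmem : hcTruncMap N ⇑x ∈ hcTruncMap N '' _ := Set.mem_image_of_mem _ hxB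
  obtain ⟨y, hy, hxy⟩ := Set.mem_iUnion₂.mp (ht hmem)
  refine Set.mem_iUnion₂.mpr ⟨y, hy, ?_⟩
  have d1 : dist x (hcTruncMap N ⇑x) ≤ Real.sqrt (2 * (2:ℝ)^(-(N:ℤ))) := by
    rw [dist_eq_norm]; exact hc_tail_est hx N
  have d2 : dist (hcTruncMap N ⇑x) y < ε/2 := Metric.mem_ball.mp hxy
  have := dist_triangle x (hcTruncMap N ⇑x) y
  exact Metric.mem_ball.mpr (by linarith)

instance : CompactSpace hilbertCube := isCompact_iff_compactSpace.mp hc_isCompact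

/-- translation by `a` in the first coordinate, as an isometry equiv -/
private def hcTransIso (a : ℝ) : (ℝ × hilbertCube) ≃ᵢ (ℝ × hilbertCube) where
  toEquiv := (Equiv.addRight a).prodCongr (Equiv.refl _)
  isometry_toFun := fun p q => by
    simp [Prod.edist_eq, Equiv.prodCongr, edist_add_right]

end HilbertCubeAux

/-- `X = ℝ × Q` (Q the Hilbert cube) with the product distance is a proper,
cocompact metric space: every closed ball is compact; for each `a ∈ ℝ` the translation
`(t, q) ↦ (t + a, q)` is a bijective isometry of `X`; and `C = [0,1] × Q` is a compact
generating domain, i.e. every point of `X` is moved into `C` by some bijective isometry. -/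
theorem real_prod_hilbertCube_proper_cocompact :
    (∀ (p : ℝ × hilbertCube) (r : ℝ), IsCompact (Metric.closedBall p r)) ∧
    (∀ a : ℝ, ∃ h : (ℝ × hilbertCube) ≃ᵢ (ℝ × hilbertCube),
        ∀ p : ℝ × hilbertCube, h p = (p.1 + a, p.2)) ∧
    IsCompact ((Set.Icc (0 : ℝ) 1) ×ˢ (Set.univ : Set hilbertCube)) ∧
    (∀ p : ℝ × hilbertCube, ∃ h : (ℝ × hilbertCube) ≃ᵢ (ℝ × hilbertCube),
        h p ∈ (Set.Icc (0 : ℝ) 1) ×ˢ (Set.univ : Set hilbertCube)) := by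
  refine ⟨fun p r => isCompact_closedBall p r,
    fun a => ⟨hcTransIso a, fun p => rfl⟩,
    isCompact_Icc.prod isCompact_univ,
    fun p => ⟨hcTransIso (-p.1), ?_⟩⟩
  have h1 : (hcTransIso (-p.1)) p = (p.1 + -p.1, p.2) := rfl
  rw [h1]
  refine ⟨?_, trivial⟩
  simp
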